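/- For programs α and path assignments Π with ν(Π) = (s₀τ₁)(s₂τ₃)… the following equivalence holds: (Π, i, k) ∈ R(α) if and only if there exist a state sequence q₀, q₁, …, q_m in M_α with m = (k−i)/2 and sets of formulas X₀, …, X_m such that (i) q₀ is the initial state of M_α; (ii) q_m ⇒ᵉ_{X_m} q_f for the final state q_f; (iii) q_l ⇒^{τ_{i+2l+1}}_{X_l} q_{l+1} for all l < m; and (iv) ψ ∈ X_l implies Π[i+2l, ∞] ⊨_T ψ for all l ≤ m. -/

import Mathlib

/-- Programs of HyperPDL-Δ: regular expressions over tuples of atomic programs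
(with `none` as the wildcard `·`) and tests drawn from a type `F` of formulas. -/
inductive Prog (P : Type) (F : Type) (n : ℕ) where
  | atom (t : Fin n → Option P) : Prog P F n
  | eps : Prog P F n
  | sum (a b : Prog P F n) : Prog P F n
  | seq (a b : Prog P F n) : Prog P F n
  | star (a : Prog P F n) : Prog P F n
  | test (ψ : F) : Prog P F n

/-- The size of a program: the number of operators and atomic symbols. -/
def Prog.size {P F : Type} {n : ℕ} : Prog P F n → ℕ
  | .atom _ => 1
  | .eps => 1
  | .sum a b => a.size + b.size + 1
  | .seq a b => a.size + b.size + 1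
  | .star a => a.size + 1
  | .test _ => 1

/-- The state space of the intermediate automaton `M_α`:
`τ` and `ε` contribute 2 states, a sum adds 2 fresh states to the disjoint union,
a concatenation is the disjoint union, a star adds 2 fresh states, a test has 3 states. -/
def Prog.St {P F : Type} {n : ℕ} : Prog P F n → Type
  | .atom _ => Fin 2
  | .eps => Fin 2
  | .sum a b => (a.St ⊕ b.St) ⊕ Fin 2
  | .seq a b => a.St ⊕ b.St
  | .star a => a.St ⊕ Fin 2
  | .test _ => Fin 3

/-- The initial state of `M_α`. -/
def Prog.q0 {P F : Type} {n : ℕ} : (α : Prog P F n) → α.St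
  | .atom _ => (0 : Fin 2)
  | .eps => (0 : Fin 2)
  | .sum _ _ => .inr 0
  | .seq a _ => .inl a.q0
  | .star _ => .inr 0
  | .test _ => (0 : Fin 3)

/-- The final state of `M_α`. -/
def Prog.qf {P F : Type} {n : ℕ} : (α : Prog P F n) → α.St
  | .atom _ => (1 : Fin 2)
  | .eps => (1 : Fin 2)
  | .sum _ _ => .inr 1
  | .seq _ b => .inr b.qf
  | .star _ => .inr 1
  | .test _ => (2 : Fin 3)

/-- The letter-reading transitions of `M_α` over the alphabet `Σⁿ`. -/
def Prog.ρ {P F : Type} {n : ℕ} : (α : Prog P F n) → α.St → (Fin n → P) → Set α.St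
  | .atom t, q, a => {q' | q = (0 : Fin 2) ∧ q' = (1 : Fin 2) ∧ ∀ l, t l = none ∨ t l = some (a l)}
  | .eps, _, _ => ∅
  | .sum c d, q, a =>
    match q with
    | .inl (.inl q) => (fun x => Sum.inl (Sum.inl x)) '' c.ρ q a
    | .inl (.inr q) => (fun x => Sum.inl (Sum.inr x)) '' d.ρ q a
    | .inr _ => ∅
  | .seq c d, q, a =>
    match q with
    | .inl q => Sum.inl '' c.ρ q a
    | .inr q => Sum.inr '' d.ρ q a
  | .star c, q, a =>
    match q with
    | .inl q => Sum.inl '' c.ρ q a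
    | .inr _ => ∅
  | .test _, _, _ => ∅

/-- The ε-transitions of `M_α` (including the backwards edges of star constructions). -/
def Prog.ρε {P F : Type} {n : ℕ} : (α : Prog P F n) → α.St → Set α.St
  | .atom _, _ => ∅
  | .eps, q => {q' | q = (0 : Fin 2) ∧ q' = (1 : Fin 2)}
  | .sum c d, q =>
    match q with
    | .inl (.inl q) => (fun x => Sum.inl (Sum.inl x)) '' c.ρε q ∪ {x | q = c.qf ∧ x = .inr 1}
    | .inl (.inr q) => (fun x => Sum.inl (Sum.inr x)) '' d.ρε q ∪ {x | q = d.qf ∧ x = .inr 1}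
    | .inr i => {x | i = 0 ∧ (x = .inl (.inl c.q0) ∨ x = .inl (.inr d.q0))}
  | .seq c d, q =>
    match q with
    | .inl q => Sum.inl '' c.ρε q ∪ {x | q = c.qf ∧ x = .inr d.q0}
    | .inr q => Sum.inr '' d.ρε q
  | .star c, q =>
    match q with
    | .inl q => Sum.inl '' c.ρε q ∪ {x | q = c.qf ∧ x = .inr 1}
    | .inr i => {x | (i = 0 ∧ (x = .inl c.q0 ∨ x = .inr 1)) ∨ (i = 1 ∧ x = .inr 0)}
  | .test _, q => {q' | (q = (0 : Fin 3) ∧ q' = (1 : Fin 3)) ∨ (q = (1 : Fin 3) ∧ q' = (2 : Fin 3))}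

/-- The ε-transitions of `M_α` with all backwards edges of star constructions removed. -/
def Prog.ρεNB {P F : Type} {n : ℕ} : (α : Prog P F n) → α.St → Set α.St
  | .atom _, _ => ∅
  | .eps, q => {q' | q = (0 : Fin 2) ∧ q' = (1 : Fin 2)}
  | .sum c d, q =>
    match q with
    | .inl (.inl q) => (fun x => Sum.inl (Sum.inl x)) '' c.ρεNB q ∪ {x | q = c.qf ∧ x = .inr 1}
    | .inl (.inr q) => (fun x => Sum.inl (Sum.inr x)) '' d.ρεNB q ∪ {x | q = d.qf ∧ x = .inr 1}
    | .inr i => {x | i = 0 ∧ (x = .inl (.inl c.q0) ∨ x = .inl (.inr d.q0))}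
  | .seq c d, q =>
    match q with
    | .inl q => Sum.inl '' c.ρεNB q ∪ {x | q = c.qf ∧ x = .inr d.q0}
    | .inr q => Sum.inr '' d.ρεNB q
  | .star c, q =>
    match q with
    | .inl q => Sum.inl '' c.ρεNB q ∪ {x | q = c.qf ∧ x = .inr 1}
    | .inr i => {x | i = 0 ∧ (x = .inl c.q0 ∨ x = .inr 1)}
  | .test _, q => {q' | (q = (0 : Fin 3) ∧ q' = (1 : Fin 3)) ∨ (q = (1 : Fin 3) ∧ q' = (2 : Fin 3))}

/-- The state-marking function `Ψ` of `M_α`: the middle state of each test `ψ?` is marked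
with `ψ`; all other states are unmarked. -/
def Prog.mark {P F : Type} {n : ℕ} : (α : Prog P F n) → α.St → Set F
  | .atom _, _ => ∅
  | .eps, _ => ∅
  | .sum c d, q =>
    match q with
    | .inl (.inl q) => c.mark q
    | .inl (.inr q) => d.mark q
    | .inr _ => ∅
  | .seq c d, q =>
    match q with
    | .inl q => c.mark q
    | .inr q => d.mark q
  | .star c, q =>
    match q with
    | .inl q => c.mark q
    | .inr _ => ∅
  | .test ψ, q => {x | q = (1 : Fin 3) ∧ x = ψ}

/-- The state space of `M_α` is finite. -/
def Prog.finSt {P F : Type} {n : ℕ} : (α : Prog P F n) → Fintype α.St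
  | .atom _ => inferInstanceAs (Fintype (Fin 2))
  | .eps => inferInstanceAs (Fintype (Fin 2))
  | .sum a b => letI := a.finSt; letI := b.finSt; inferInstanceAs (Fintype ((a.St ⊕ b.St) ⊕ Fin 2))
  | .seq a b => letI := a.finSt; letI := b.finSt; inferInstanceAs (Fintype (a.St ⊕ b.St))
  | .star a => letI := a.finSt; inferInstanceAs (Fintype (a.St ⊕ Fin 2))
  | .test _ => inferInstanceAs (Fintype (Fin 3))

/-- Marked ε-reachability: `EpsReach ρε Ψ q X q'` holds iff there is an ε-path from `q`
to `q'` collecting exactly the markings in `X`. -/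
inductive EpsReach {Q F : Type} (ρε : Q → Set Q) (Ψ : Q → Set F) : Q → Set F → Q → Prop
  | refl (q : Q) : EpsReach ρε Ψ q (Ψ q) q
  | step {q q' q'' : Q} {X : Set F} :
      q' ∈ ρε q → EpsReach ρε Ψ q' X q'' → EpsReach ρε Ψ q (X ∪ Ψ q) q''

/-- Marked `τ`-reachability: an ε-path collecting markings `X` followed by one letter step. -/
def TauReach {Q A F : Type} (ρ : Q → A → Set Q) (ρε : Q → Set Q) (Ψ : Q → Set F)
    (q : Q) (a : A) (X : Set F) (q'' : Q) : Prop :=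
  ∃ q', EpsReach ρε Ψ q X q' ∧ q'' ∈ ρ q' a

/-- An infinite alternating path/trace: `st j` is the element at (paper) position `2j`,
`pr j` the atomic program at (paper) position `2j+1`. -/
structure HPath (S P : Type) where
  st : ℕ → S
  pr : ℕ → P

/-- The suffix `p[2j, ∞]` of a path. -/
def HPath.drop {S P : Type} (p : HPath S P) (j : ℕ) : HPath S P :=
  ⟨fun m => p.st (j + m), fun m => p.pr (j + m)⟩

/-- The shifted path assignment `Pa[2j, ∞]`. -/
def PAdrop {S P : Type} {n : ℕ} (Pa : Fin n → HPath S P) (j : ℕ) : Fin n → HPath S P :=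
  fun l => (Pa l).drop j

/-- The program satisfaction relation `(Pa, i, k) ∈ R(α)` of HyperPDL-Δ (for even indices
`i ≤ k`), relative to a satisfaction predicate `sat` for the test formulas:
`sat ψ Pa'` means `Pa' ⊨_T ψ`. -/
def Match {S P F : Type} {n : ℕ} (sat : F → (Fin n → HPath S P) → Prop) :
    Prog P F n → (Fin n → HPath S P) → ℕ → ℕ → Prop
  | .atom t, Pa, i, k => k = i + 2 ∧ ∀ l, t l = none ∨ t l = some ((Pa l).pr (i / 2))
  | .eps, _, i, k => i = k
  | .sum a b, Pa, i, k => Match sat a Pa i k ∨ Match sat b Pa i k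
  | .seq a b, Pa, i, k => ∃ j, i ≤ j ∧ j ≤ k ∧ Match sat a Pa i j ∧ Match sat b Pa j k
  | .star a, Pa, i, k => ∃ (m : ℕ) (js : Fin (m + 1) → ℕ), js 0 = i ∧ js (Fin.last m) = k ∧
      ∀ l : Fin m, js l.castSucc ≤ js l.succ ∧ Match sat a Pa (js l.castSucc) (js l.succ)
  | .test ψ, Pa, i, k => i = k ∧ sat ψ (PAdrop Pa (i / 2))

/-- The witnessing condition of Lemma 2: a state sequence `q₀ … q_m` in `M_α` with
`m = (k - i)/2` and marking sets `X₀ … X_m` such that (i) `q₀` is initial, (ii) the last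
state ε-reaches the final state collecting `X_m`, (iii) consecutive states are
`τ`-reachable via the letters of `ν(Pa)` collecting the `X_l`, and (iv) every formula in
`X_l` holds at the corresponding suffix of `Pa`. -/
def Witness {S P F : Type} {n : ℕ} (sat : F → (Fin n → HPath S P) → Prop)
    (α : Prog P F n) (Pa : Fin n → HPath S P) (i k : ℕ) : Prop :=
  ∃ (q : Fin ((k - i) / 2 + 1) → α.St) (X : Fin ((k - i) / 2 + 1) → Set F),
    q 0 = α.q0 ∧
    EpsReach α.ρε α.mark (q (Fin.last _)) (X (Fin.last _)) α.qf ∧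
    (∀ l : Fin ((k - i) / 2),
      TauReach α.ρ α.ρε α.mark (q l.castSucc) (fun m => (Pa m).pr (i / 2 + l))
        (X l.castSucc) (q l.succ)) ∧
    (∀ l : Fin ((k - i) / 2 + 1), ∀ ψ ∈ X l, sat ψ (PAdrop Pa (i / 2 + l)))

section Generic

variable {Q A F : Type}

inductive GAcc (ρ : Q → A → Set Q) (ρε : Q → Set Q) (Ψ : Q → Set F)
    (ok : F → ℕ → Prop) (L : ℕ → A) : ℕ → Q → ℕ → Q → Prop
  | refl (j q) : (∀ ψ ∈ Ψ q, ok ψ j) → GAcc ρ ρε Ψ ok L j q j q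
  | eps {j q j' q' q''} : q' ∈ ρε q → (∀ ψ ∈ Ψ q, ok ψ j) →
      GAcc ρ ρε Ψ ok L j q' j' q'' → GAcc ρ ρε Ψ ok L j q j' q''
  | step {j q j' q' q''} : q' ∈ ρ q (L j) → (∀ ψ ∈ Ψ q, ok ψ j) →
      GAcc ρ ρε Ψ ok L (j+1) q' j' q'' → GAcc ρ ρε Ψ ok L j q j' q''

variable {ρ : Q → A → Set Q} {ρε : Q → Set Q} {Ψ : Q → Set F} {ok : F → ℕ → Prop} {L : ℕ → A}

lemma GAcc.le {j q j' q'} (h : GAcc ρ ρε Ψ ok L j q j' q') : j ≤ j' := by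
  induction h <;> omega

lemma GAcc.trans {j q jm qm j' q'} (h : GAcc ρ ρε Ψ ok L j q jm qm)
    (h2 : GAcc ρ ρε Ψ ok L jm qm j' q') : GAcc ρ ρε Ψ ok L j q j' q' := by
  induction h with
  | refl => exact h2
  | eps he hok _ ih => exact .eps he hok (ih h2)
  | step hs hok _ ih => exact .step hs hok (ih h2)

lemma GAcc.ok_last {j q j' q'} (h : GAcc ρ ρε Ψ ok L j q j' q') :
    ∀ ψ ∈ Ψ q', ok ψ j' := by
  induction h with
  | refl _ _ h => exact h
  | eps _ _ _ ih => exact ih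
  | step _ _ _ ih => exact ih

lemma GAcc.map {Q₂ : Type} {ρ₂ : Q₂ → A → Set Q₂} {ρε₂ : Q₂ → Set Q₂} {Ψ₂ : Q₂ → Set F}
    (f : Q → Q₂) (hρ : ∀ ⦃q a q'⦄, q' ∈ ρ q a → f q' ∈ ρ₂ (f q) a)
    (hε : ∀ ⦃q q'⦄, q' ∈ ρε q → f q' ∈ ρε₂ (f q))
    (hΨ : ∀ q, Ψ₂ (f q) ⊆ Ψ q)
    {j q j' q'} (h : GAcc ρ ρε Ψ ok L j q j' q') :
    GAcc ρ₂ ρε₂ Ψ₂ ok L j (f q) j' (f q') := by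
  induction h with
  | refl j q hok => exact .refl j (f q) fun ψ hψ => hok ψ (hΨ q hψ)
  | eps he hok _ ih => exact .eps (hε he) (fun ψ hψ => hok ψ (hΨ _ hψ)) ih
  | step hs hok _ ih => exact .step (hρ hs) (fun ψ hψ => hok ψ (hΨ _ hψ)) ih

lemma EpsReach.psi_subset {q X q'} (h : EpsReach ρε Ψ q X q') : Ψ q' ⊆ X := by
  induction h with
  | refl q => exact subset_rfl
  | step _ _ ih => exact ih.trans Set.subset_union_left

lemma epsReach_gacc_prefix {j q X qm j' q'} (h : EpsReach ρε Ψ q X qm)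
    (hok : ∀ ψ ∈ X, ok ψ j) (h2 : GAcc ρ ρε Ψ ok L j qm j' q') :
    GAcc ρ ρε Ψ ok L j q j' q' := by
  induction h with
  | refl q => exact h2
  | @step q q' q'' X he _ ih =>
      exact .eps he (fun ψ hψ => hok ψ (Set.mem_union_right _ hψ))
        (ih (fun ψ hψ => hok ψ (Set.mem_union_left _ hψ)) h2)

lemma GAcc.of_epsReach {j q X q'} (h : EpsReach ρε Ψ q X q')
    (hok : ∀ ψ ∈ X, ok ψ j) : GAcc ρ ρε Ψ ok L j q j q' :=
  epsReach_gacc_prefix h hok (.refl j q' fun ψ hψ => hok ψ (h.psi_subset hψ))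

lemma GAcc.of_tauReach {j q X q''} (h : TauReach ρ ρε Ψ q (L j) X q'')
    (hok : ∀ ψ ∈ X, ok ψ j) {j' q'} (h2 : GAcc ρ ρε Ψ ok L (j+1) q'' j' q') :
    GAcc ρ ρε Ψ ok L j q j' q' := by
  obtain ⟨qm, he, hr⟩ := h
  exact epsReach_gacc_prefix he hok (.step hr (fun ψ hψ => hok ψ (he.psi_subset hψ)) h2)

/-- Fin-indexed witness form. -/
def FW (ρ : Q → A → Set Q) (ρε : Q → Set Q) (Ψ : Q → Set F) (ok : F → ℕ → Prop) (L : ℕ → A)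
    (N j : ℕ) (q qf : Q) : Prop :=
  ∃ (qs : Fin (N+1) → Q) (X : Fin (N+1) → Set F),
    qs 0 = q ∧
    EpsReach ρε Ψ (qs (Fin.last N)) (X (Fin.last N)) qf ∧
    (∀ l : Fin N, TauReach ρ ρε Ψ (qs l.castSucc) (L (j + l)) (X l.castSucc) (qs l.succ)) ∧
    (∀ l : Fin (N+1), ∀ ψ ∈ X l, ok ψ (j + l))

lemma FW.nil {j q qf X} (h : EpsReach ρε Ψ q X qf) (hok : ∀ ψ ∈ X, ok ψ j) :
    FW ρ ρε Ψ ok L 0 j q qf := by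
  refine ⟨fun _ => q, fun _ => X, rfl, h, fun l => l.elim0, fun l ψ hψ => ?_⟩
  simpa using hok ψ hψ

lemma FW.cons {N j q q' qf} (hρ : q' ∈ ρ q (L j)) (hok : ∀ ψ ∈ Ψ q, ok ψ j)
    (h : FW ρ ρε Ψ ok L N (j+1) q' qf) : FW ρ ρε Ψ ok L (N+1) j q qf := by
  obtain ⟨qs, X, h0, hlast, htau, hok'⟩ := h
  refine ⟨Fin.cons q qs, Fin.cons (Ψ q) X, Fin.cons_zero _ _, ?_, ?_, ?_⟩
  · have : Fin.last (N+1) = (Fin.last N).succ := rfl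
    rw [this, Fin.cons_succ, Fin.cons_succ]
    exact hlast
  · intro l
    refine Fin.cases ?_ ?_ l
    · have h1 : (Fin.cons q qs : Fin (N+2) → Q) ((0 : Fin (N+1)).succ) = q' := by
        rw [Fin.cons_succ, h0]
      simp only [Fin.castSucc_zero, Fin.cons_zero, h1]
      exact ⟨q, .refl q, by simpa using hρ⟩
    · intro m
      have e1 : (m.succ).castSucc = (m.castSucc).succ := (Fin.succ_castSucc m).symm
      rw [e1, Fin.cons_succ, Fin.cons_succ, Fin.cons_succ]
      have := htau m
      have e2 : j + (m.succ : ℕ) = (j + 1) + (m : ℕ) := by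
        simp only [Fin.val_succ]; omega
      rw [e2]
      exact this
  · intro l
    refine Fin.cases ?_ ?_ l
    · simpa using hok
    · intro m
      rw [Fin.cons_succ]
      have e2 : j + (m.succ : ℕ) = (j + 1) + (m : ℕ) := by
        simp only [Fin.val_succ]; omega
      rw [e2]
      exact hok' m

lemma FW.eps {N j q q' qf} (hε : q' ∈ ρε q) (hok : ∀ ψ ∈ Ψ q, ok ψ j)
    (h : FW ρ ρε Ψ ok L N j q' qf) : FW ρ ρε Ψ ok L N j q qf := by
  obtain ⟨qs, X, h0, hlast, htau, hok'⟩ := h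
  refine ⟨fun l => if l = 0 then q else qs l, fun l => if l = 0 then X 0 ∪ Ψ q else X l,
    by simp, ?_, ?_, ?_⟩
  · rcases Nat.eq_zero_or_pos N with hN | hN
    · subst hN
      have hl : (Fin.last 0 : Fin 1) = 0 := rfl
      beta_reduce
      rw [if_pos hl, if_pos hl]
      rw [hl, h0] at hlast
      exact EpsReach.step hε hlast
    · have hl : (Fin.last N : Fin (N+1)) ≠ 0 := by
        simp [Fin.ext_iff]; omega
      beta_reduce
      simp only [if_neg hl]
      exact hlast
  · intro l
    beta_reduce
    by_cases hl : l.castSucc = 0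
    · have hl' : l.succ ≠ (0 : Fin (N+1)) := Fin.succ_ne_zero l
      simp only [hl, if_pos rfl, if_neg hl']
      obtain ⟨mid, he, hr⟩ := htau l
      rw [hl, h0] at he
      have hc : (l : ℕ) = 0 := by simpa [Fin.ext_iff] using hl
      exact ⟨mid, EpsReach.step hε he, hr⟩
    · have hl' : l.succ ≠ (0 : Fin (N+1)) := Fin.succ_ne_zero l
      simp only [if_neg hl, if_neg hl']
      exact htau l
  · intro l ψ hψ
    beta_reduce at hψ
    by_cases hl : l = 0
    · subst hl
      simp only [if_pos rfl] at hψ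
      rcases hψ with hψ | hψ
      · exact hok' 0 ψ hψ
      · simpa using hok ψ hψ
    · simp only [if_neg hl] at hψ
      exact hok' l ψ hψ

lemma GAcc.to_FW {j q j' qf} (h : GAcc ρ ρε Ψ ok L j q j' qf) :
    FW ρ ρε Ψ ok L (j' - j) j q qf := by
  induction h with
  | refl j q hok =>
      simp only [Nat.sub_self]
      exact FW.nil (.refl q) hok
  | eps he hok _ ih => exact ih.eps he hok
  | @step j q j' q' q'' hs hok h ih =>
      have hle : j + 1 ≤ j' := h.le
      have e : j' - j = (j' - (j+1)) + 1 := by omega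
      rw [e]
      exact FW.cons hs hok ih

lemma FW.to_GAcc : ∀ (N j : ℕ) (qs : Fin (N+1) → Q) (X : Fin (N+1) → Set F) (qf : Q),
    EpsReach ρε Ψ (qs (Fin.last N)) (X (Fin.last N)) qf →
    (∀ l : Fin N, TauReach ρ ρε Ψ (qs l.castSucc) (L (j + l)) (X l.castSucc) (qs l.succ)) →
    (∀ l : Fin (N+1), ∀ ψ ∈ X l, ok ψ (j + l)) →
    GAcc ρ ρε Ψ ok L j (qs 0) (j + N) qf := by
  intro N
  induction N with
  | zero =>
      intro j qs X qf hlast _ hok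
      have : (Fin.last 0 : Fin 1) = 0 := rfl
      rw [this] at hlast
      simpa using GAcc.of_epsReach hlast (by simpa using hok 0)
  | succ N ih =>
      intro j qs X qf hlast htau hok
      have h0 := htau 0
      have hok0 : ∀ ψ ∈ X (0 : Fin (N+1)).castSucc, ok ψ j := by
        simpa using hok (0 : Fin (N+2))
      have htl : GAcc ρ ρε Ψ ok L (j+1) (qs (0 : Fin (N+1)).succ) ((j+1) + N) qf := by
        have := ih (j+1) (fun l => qs l.succ) (fun l => X l.succ) qf
          (by exact hlast)
          (by
            intro l
            beta_reduce
            rw [show (j + 1) + (l : ℕ) = j + ((l : ℕ) + 1) by omega]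
            exact htau l.succ)
          (by
            intro l ψ hψ
            rw [show (j + 1) + (l : ℕ) = j + ((l : ℕ) + 1) by omega]
            exact hok l.succ ψ hψ)
        exact this
      have hstep : GAcc ρ ρε Ψ ok L j (qs 0) ((j+1) + N) qf := by
        refine GAcc.of_tauReach ?_ hok0 htl
        have e : j + ((0 : Fin (N+1)).castSucc : ℕ) = j := by simp
        simpa [e, Fin.castSucc_zero] using h0
      have e : (j+1) + N = j + (N+1) := by omega
      rwa [e] at hstep

lemma FW_iff_GAcc {N j : ℕ} {q qf : Q} :
    FW ρ ρε Ψ ok L N j q qf ↔ GAcc ρ ρε Ψ ok L j q (j + N) qf := by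
  constructor
  · rintro ⟨qs, X, h0, hlast, htau, hok⟩
    rw [← h0]
    exact FW.to_GAcc N j qs X qf hlast htau hok
  · intro h
    have := h.to_FW
    rwa [show j + N - j = N by omega] at this

end Generic
section Specific

variable {S P F : Type} {n : ℕ}

/-- Abbreviation: `GAcc` for the automaton `M_α` with the concrete letters and
satisfaction predicate induced by the path assignment `Pa`. -/
abbrev AG (sat : F → (Fin n → HPath S P) → Prop) (Pa : Fin n → HPath S P)
    (α : Prog P F n) : ℕ → α.St → ℕ → α.St → Prop :=
  GAcc α.ρ α.ρε α.mark (fun ψ j => sat ψ (PAdrop Pa j)) (fun j m => (Pa m).pr j)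

variable (sat : F → (Fin n → HPath S P) → Prop) (Pa : Fin n → HPath S P)

lemma match_even_le {α : Prog P F n} {i k : ℕ} (h : Match sat α Pa i k) (hi : Even i) :
    Even k ∧ i ≤ k := by
  induction α generalizing i k with
  | atom t =>
      obtain ⟨rfl, -⟩ := h
      obtain ⟨a, rfl⟩ := hi
      exact ⟨⟨a + 1, by ring⟩, by omega⟩
  | eps => obtain rfl := h; exact ⟨hi, le_rfl⟩
  | sum a b iha ihb => rcases h with h | h; exacts [iha h hi, ihb h hi]
  | seq a b iha ihb =>
      obtain ⟨j, _, _, h1, h2⟩ := h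
      obtain ⟨hj, hij⟩ := iha h1 hi
      obtain ⟨hk, hjk⟩ := ihb h2 hj
      exact ⟨hk, hij.trans hjk⟩
  | star a iha =>
      obtain ⟨m, js, h0, hl, hs⟩ := h
      have key : ∀ l : Fin (m + 1), Even (js l) ∧ i ≤ js l := by
        intro l
        induction l using Fin.induction with
        | zero => rw [h0]; exact ⟨hi, le_rfl⟩
        | succ l ih =>
            obtain ⟨he, hle⟩ := ih
            obtain ⟨he', hle'⟩ := iha (hs l).2 he
            exact ⟨he', hle.trans hle'⟩
      have := key (Fin.last m)
      rw [hl] at this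
      exact this
  | test ψ => obtain ⟨rfl, -⟩ := h; exact ⟨hi, le_rfl⟩

lemma atom_inv {t : Fin n → Option P} {j j' : ℕ} {q q'' : Fin 2}
    (h : AG sat Pa (.atom t) j q j' q'') :
    (q = 0 → q'' = 1 → j' = j + 1 ∧ ∀ l, t l = none ∨ t l = some ((Pa l).pr j)) ∧
    (q = 1 → q'' = 1 → j' = j) := by
  induction h with
  | refl j q hok =>
      refine ⟨fun h1 h2 => ?_, fun _ _ => rfl⟩
      simp [h1] at h2
  | eps he hok _ ih => simp [Prog.ρε] at he; exact absurd he (Set.notMem_empty _)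
  | @step j q j'' q' _ hs hok _ ih =>
      obtain ⟨rfl, rfl, hcond⟩ := hs
      refine ⟨fun _ hf => ⟨?_, hcond⟩, fun h1 _ => ?_⟩
      · rw [ih.2 rfl hf]
      · exact absurd h1 (by decide)

lemma eps_inv {j j' : ℕ} {q q'' : Fin 2}
    (h : AG sat Pa (Prog.eps (P := P) (F := F) (n := n)) j q j' q'') :
    (q = 0 → q'' = 1 → j' = j) ∧ (q = 1 → q'' = 1 → j' = j) := by
  induction h with
  | refl j q hok =>
      refine ⟨fun h1 h2 => ?_, fun _ _ => rfl⟩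
      simp [h1] at h2
  | eps he hok _ ih =>
      obtain ⟨rfl, rfl⟩ := he
      exact ⟨fun _ hf => ih.2 rfl hf, fun h1 _ => absurd h1 (by decide)⟩
  | step hs hok _ ih => simp [Prog.ρ] at hs; exact absurd hs (Set.notMem_empty _)

lemma test_inv {ψ : F} {j j' : ℕ} {q q'' : Fin 3}
    (h : AG sat Pa (Prog.test (P := P) (n := n) ψ) j q j' q'') :
    (q = 0 → q'' = 2 → j' = j ∧ sat ψ (PAdrop Pa j)) ∧
    (q = 1 → q'' = 2 → j' = j ∧ sat ψ (PAdrop Pa j)) ∧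
    (q = 2 → q'' = 2 → j' = j) := by
  induction h with
  | refl j q hok =>
      refine ⟨fun h1 h2 => ?_, fun h1 h2 => ?_, fun _ _ => rfl⟩
      · simp [h1] at h2
      · simp [h1] at h2
  | @eps j q j'' q' _ he hok _ ih =>
      rcases he with ⟨rfl, rfl⟩ | ⟨rfl, rfl⟩
      · refine ⟨fun _ hf => ih.2.1 rfl hf, fun h1 _ => absurd h1 (by decide),
          fun h1 _ => absurd h1 (by decide)⟩
      · refine ⟨fun h1 _ => absurd h1 (by decide), fun _ hf => ⟨ih.2.2 rfl hf, ?_⟩,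
          fun h1 _ => absurd h1 (by decide)⟩
        exact hok ψ ⟨rfl, rfl⟩
  | step hs hok _ ih => simp [Prog.ρ] at hs; exact absurd hs (Set.notMem_empty _)

end Specific
section Composite

variable {S P F : Type} {n : ℕ}
variable (sat : F → (Fin n → HPath S P) → Prop) (Pa : Fin n → HPath S P)

lemma sum_inv {c d : Prog P F n} {j j' : ℕ} {q q'' : (Prog.sum c d).St}
    (h : AG sat Pa (.sum c d) j q j' q'') (hf : q'' = Sum.inr 1) :
    (∀ qc, q = .inl (.inl qc) → AG sat Pa c j qc j' c.qf) ∧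
    (∀ qd, q = .inl (.inr qd) → AG sat Pa d j qd j' d.qf) ∧
    (q = .inr 0 → AG sat Pa c j c.q0 j' c.qf ∨ AG sat Pa d j d.q0 j' d.qf) ∧
    (q = .inr 1 → j' = j) := by
  induction h with
  | refl j q hok =>
      subst hf
      exact ⟨fun qc hq => by injection hq, fun qd hq => by injection hq,
        fun hq => by injection hq with h1; exact absurd h1 (by decide), fun _ => rfl⟩
  | @eps j q j2 q' _ he hok _ ih =>
      specialize ih hf
      rcases q with (qc | qd) | i
      · refine ⟨fun qc' hq => ?_, fun qd hq => by injection hq with h1; injection h1,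
          fun hq => by injection hq, fun hq => by injection hq⟩
        obtain rfl : qc = qc' := by injection hq with h1; injection h1 with h2
        rcases he with ⟨x, hx, hxe⟩ | ⟨rfl, rfl⟩
        · exact GAcc.eps hx hok (ih.1 x hxe.symm)
        · rw [ih.2.2.2 rfl]
          exact GAcc.refl j c.qf hok
      · refine ⟨fun qc hq => by injection hq with h1; injection h1, fun qd' hq => ?_,
          fun hq => by injection hq, fun hq => by injection hq⟩
        obtain rfl : qd = qd' := by injection hq with h1; injection h1 with h2
        rcases he with ⟨x, hx, hxe⟩ | ⟨rfl, rfl⟩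
        · exact GAcc.eps hx hok (ih.2.1 x hxe.symm)
        · rw [ih.2.2.2 rfl]
          exact GAcc.refl j d.qf hok
      · obtain ⟨rfl, hq'⟩ := he
        refine ⟨fun qc hq => by injection hq, fun qd hq => by injection hq, fun _ => ?_,
          fun hq => by injection hq with h1; exact absurd h1 (by decide)⟩
        rcases hq' with rfl | rfl
        · exact Or.inl (ih.1 c.q0 rfl)
        · exact Or.inr (ih.2.1 d.q0 rfl)
  | @step j q j2 q' _ hs hok _ ih =>
      specialize ih hf
      rcases q with (qc | qd) | i
      · refine ⟨fun qc' hq => ?_, fun qd hq => by injection hq with h1; injection h1,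
          fun hq => by injection hq, fun hq => by injection hq⟩
        obtain rfl : qc = qc' := by injection hq with h1; injection h1 with h2
        obtain ⟨x, hx, hxe⟩ := hs
        exact GAcc.step hx hok (ih.1 x hxe.symm)
      · refine ⟨fun qc hq => by injection hq with h1; injection h1, fun qd' hq => ?_,
          fun hq => by injection hq, fun hq => by injection hq⟩
        obtain rfl : qd = qd' := by injection hq with h1; injection h1 with h2
        obtain ⟨x, hx, hxe⟩ := hs
        exact GAcc.step hx hok (ih.2.1 x hxe.symm)
      · simp [Prog.ρ] at hs

lemma seq_inv {c d : Prog P F n} {j j' : ℕ} {q q'' : (Prog.seq c d).St}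
    (h : AG sat Pa (.seq c d) j q j' q'') (hf : q'' = Sum.inr d.qf) :
    (∀ qc, q = .inl qc → ∃ jm, AG sat Pa c j qc jm c.qf ∧ AG sat Pa d jm d.q0 j' d.qf) ∧
    (∀ qd, q = .inr qd → AG sat Pa d j qd j' d.qf) := by
  induction h with
  | refl j q hok =>
      subst hf
      refine ⟨fun qc hq => by injection hq, fun qd hq => ?_⟩
      obtain rfl : d.qf = qd := by injection hq
      exact GAcc.refl j d.qf hok
  | @eps j q j2 q' _ he hok _ ih =>
      specialize ih hf
      rcases q with qc | qd
      · refine ⟨fun qc' hq => ?_, fun qd hq => by injection hq⟩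
        obtain rfl : qc = qc' := by injection hq
        rcases he with ⟨x, hx, hxe⟩ | ⟨rfl, rfl⟩
        · obtain ⟨jm, h1, h2⟩ := ih.1 x hxe.symm
          exact ⟨jm, GAcc.eps hx hok h1, h2⟩
        · exact ⟨j, GAcc.refl j c.qf hok, ih.2 d.q0 rfl⟩
      · refine ⟨fun qc hq => by injection hq, fun qd' hq => ?_⟩
        obtain rfl : qd = qd' := by injection hq
        obtain ⟨x, hx, hxe⟩ := he
        exact GAcc.eps hx hok (ih.2 x hxe.symm)
  | @step j q j2 q' _ hs hok _ ih =>
      specialize ih hf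
      rcases q with qc | qd
      · refine ⟨fun qc' hq => ?_, fun qd hq => by injection hq⟩
        obtain rfl : qc = qc' := by injection hq
        obtain ⟨x, hx, hxe⟩ := hs
        obtain ⟨jm, h1, h2⟩ := ih.1 x hxe.symm
        exact ⟨jm, GAcc.step hx hok h1, h2⟩
      · refine ⟨fun qc hq => by injection hq, fun qd' hq => ?_⟩
        obtain rfl : qd = qd' := by injection hq
        obtain ⟨x, hx, hxe⟩ := hs
        exact GAcc.step hx hok (ih.2 x hxe.symm)

/-- Iterated traversal of the sub-automaton of a star. -/
abbrev AGIter (c : Prog P F n) (j j' : ℕ) : Prop :=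
  Relation.ReflTransGen (fun a b => AG sat Pa c a c.q0 b c.qf) j j'

lemma AGstar_inv {c : Prog P F n} {j j' : ℕ} {q q'' : (Prog.star c).St}
    (h : AG sat Pa (.star c) j q j' q'') (hf : q'' = Sum.inr 1) :
    (∀ qc, q = .inl qc → ∃ jm, AG sat Pa c j qc jm c.qf ∧ AGIter sat Pa c jm j') ∧
    (q = .inr 0 → AGIter sat Pa c j j') ∧
    (q = .inr 1 → AGIter sat Pa c j j') := by
  induction h with
  | refl j q hok =>
      subst hf
      exact ⟨fun qc hq => by injection hq,
        fun hq => by injection hq with h1; exact absurd h1 (by decide),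
        fun _ => Relation.ReflTransGen.refl⟩
  | @eps j q j2 q' _ he hok _ ih =>
      specialize ih hf
      rcases q with qc | i
      · refine ⟨fun qc' hq => ?_, fun hq => by injection hq, fun hq => by injection hq⟩
        obtain rfl : qc = qc' := by injection hq
        rcases he with ⟨x, hx, hxe⟩ | ⟨rfl, rfl⟩
        · obtain ⟨jm, h1, h2⟩ := ih.1 x hxe.symm
          exact ⟨jm, GAcc.eps hx hok h1, h2⟩
        · exact ⟨j, GAcc.refl j c.qf hok, ih.2.2 rfl⟩
      · refine ⟨fun qc hq => by injection hq, fun hq => ?_, fun hq => ?_⟩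
        · obtain rfl : i = 0 := by injection hq
          rcases he with ⟨-, rfl | rfl⟩ | ⟨h1, -⟩
          · obtain ⟨jm, h1, h2⟩ := ih.1 c.q0 rfl
            exact Relation.ReflTransGen.head h1 h2
          · exact ih.2.2 rfl
          · exact absurd h1 (by decide)
        · obtain rfl : i = 1 := by injection hq
          rcases he with ⟨h1, -⟩ | ⟨-, rfl⟩
          · exact absurd h1 (by decide)
          · exact ih.2.1 rfl
  | @step j q j2 q' _ hs hok _ ih =>
      specialize ih hf
      rcases q with qc | i
      · refine ⟨fun qc' hq => ?_, fun hq => by injection hq, fun hq => by injection hq⟩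
        obtain rfl : qc = qc' := by injection hq
        obtain ⟨x, hx, hxe⟩ := hs
        obtain ⟨jm, h1, h2⟩ := ih.1 x hxe.symm
        exact ⟨jm, GAcc.step hx hok h1, h2⟩
      · simp [Prog.ρ] at hs

end Composite
section Main

variable {S P F : Type} {n : ℕ}
variable (sat : F → (Fin n → HPath S P) → Prop) (Pa : Fin n → HPath S P)


lemma AG_map_sum_inl {c d : Prog P F n} {j j' : ℕ} {qc qc' : c.St}
    (h : AG sat Pa c j qc j' qc') :
    AG sat Pa (.sum c d) j (.inl (.inl qc)) j' (.inl (.inl qc')) := by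
  refine GAcc.map (fun x => Sum.inl (Sum.inl x)) ?_ ?_ (fun q => subset_rfl) h
  · intro q a q' hx; exact ⟨q', hx, rfl⟩
  · intro q q' hx; exact Or.inl ⟨q', hx, rfl⟩

lemma AG_map_sum_inr {c d : Prog P F n} {j j' : ℕ} {qd qd' : d.St}
    (h : AG sat Pa d j qd j' qd') :
    AG sat Pa (.sum c d) j (.inl (.inr qd)) j' (.inl (.inr qd')) := by
  refine GAcc.map (fun x => Sum.inl (Sum.inr x)) ?_ ?_ (fun q => subset_rfl) h
  · intro q a q' hx; exact ⟨q', hx, rfl⟩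
  · intro q q' hx; exact Or.inl ⟨q', hx, rfl⟩

lemma AG_map_seq_inl {c d : Prog P F n} {j j' : ℕ} {qc qc' : c.St}
    (h : AG sat Pa c j qc j' qc') :
    AG sat Pa (.seq c d) j (.inl qc) j' (.inl qc') := by
  refine GAcc.map Sum.inl ?_ ?_ (fun q => subset_rfl) h
  · intro q a q' hx; exact ⟨q', hx, rfl⟩
  · intro q q' hx; exact Or.inl ⟨q', hx, rfl⟩

lemma AG_map_seq_inr {c d : Prog P F n} {j j' : ℕ} {qd qd' : d.St}
    (h : AG sat Pa d j qd j' qd') :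
    AG sat Pa (.seq c d) j (.inr qd) j' (.inr qd') := by
  refine GAcc.map Sum.inr ?_ ?_ (fun q => subset_rfl) h
  · intro q a q' hx; exact ⟨q', hx, rfl⟩
  · intro q q' hx; exact ⟨q', hx, rfl⟩

lemma AG_map_star_inl {c : Prog P F n} {j j' : ℕ} {qc qc' : c.St}
    (h : AG sat Pa c j qc j' qc') :
    AG sat Pa (.star c) j (.inl qc) j' (.inl qc') := by
  refine GAcc.map Sum.inl ?_ ?_ (fun q => subset_rfl) h
  · intro q a q' hx; exact ⟨q', hx, rfl⟩
  · intro q q' hx; exact Or.inl ⟨q', hx, rfl⟩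

theorem match_iff_AG (α : Prog P F n) (j j' : ℕ) :
    Match sat α Pa (2 * j) (2 * j') ↔ AG sat Pa α j α.q0 j' α.qf := by
  induction α generalizing j j' with
  | atom t =>
      constructor
      · rintro ⟨hk, hcond⟩
        rw [show 2 * j / 2 = j from by omega] at hcond
        obtain rfl : j' = j + 1 := by omega
        exact GAcc.step ⟨rfl, rfl, hcond⟩ (fun ψ hψ => hψ.elim)
          (GAcc.refl (j + 1) (1 : Fin 2) (fun ψ hψ => hψ.elim))
      · intro h
        obtain ⟨h1, h2⟩ := (atom_inv sat Pa h).1 rfl rfl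
        refine ⟨by omega, fun l => ?_⟩
        rw [show 2 * j / 2 = j from by omega]
        exact h2 l
  | eps =>
      constructor
      · intro h
        obtain rfl : j = j' := by
          have : 2 * j = 2 * j' := h
          omega
        exact GAcc.eps ⟨rfl, rfl⟩ (fun ψ hψ => hψ.elim)
          (GAcc.refl j (1 : Fin 2) (fun ψ hψ => hψ.elim))
      · intro h
        have := (eps_inv sat Pa h).1 rfl rfl
        show 2 * j = 2 * j'
        omega
  | sum c d ihc ihd =>
      constructor
      · intro h
        rcases h with h | h
        · have hg := (ihc j j').mp h
          have hm : AG sat Pa (.sum c d) j (.inl (.inl c.q0)) j' (.inl (.inl c.qf)) :=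
            AG_map_sum_inl sat Pa hg
          exact GAcc.eps ⟨rfl, Or.inl rfl⟩ (fun ψ hψ => hψ.elim)
            (hm.trans (GAcc.eps (Or.inr ⟨rfl, rfl⟩) hm.ok_last
              (GAcc.refl j' _ (fun ψ hψ => hψ.elim))))
        · have hg := (ihd j j').mp h
          have hm : AG sat Pa (.sum c d) j (.inl (.inr d.q0)) j' (.inl (.inr d.qf)) :=
            AG_map_sum_inr sat Pa hg
          exact GAcc.eps ⟨rfl, Or.inr rfl⟩ (fun ψ hψ => hψ.elim)
            (hm.trans (GAcc.eps (Or.inr ⟨rfl, rfl⟩) hm.ok_last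
              (GAcc.refl j' _ (fun ψ hψ => hψ.elim))))
      · intro h
        rcases (sum_inv sat Pa h rfl).2.2.1 rfl with hg | hg
        · exact Or.inl ((ihc j j').mpr hg)
        · exact Or.inr ((ihd j j').mpr hg)
  | seq c d ihc ihd =>
      constructor
      · rintro ⟨jm, h1, h2, hmc, hmd⟩
        obtain ⟨b, hb⟩ := (match_even_le sat Pa hmc ⟨j, by ring⟩).1
        rw [show jm = 2 * b from by omega] at hmc hmd
        have hc := (ihc j b).mp hmc
        have hd := (ihd b j').mp hmd
        have hmc' : AG sat Pa (.seq c d) j (.inl c.q0) b (.inl c.qf) :=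
          AG_map_seq_inl sat Pa hc
        have hmd' : AG sat Pa (.seq c d) b (.inr d.q0) j' (.inr d.qf) :=
          AG_map_seq_inr sat Pa hd
        exact hmc'.trans (GAcc.eps (Or.inr ⟨rfl, rfl⟩) hmc'.ok_last hmd')
      · intro h
        obtain ⟨jm, h1, h2⟩ := (seq_inv sat Pa h rfl).1 c.q0 rfl
        refine ⟨2 * jm, ?_, ?_, (ihc j jm).mpr h1, (ihd jm j').mpr h2⟩
        · have := h1.le; omega
        · have := h2.le; omega
  | star c ihc =>
      have fwd : ∀ a b : ℕ, AGIter sat Pa c a b →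
          AG sat Pa (.star c) a (.inr 0) b (.inr 1) := by
        intro a b hit
        induction hit using Relation.ReflTransGen.head_induction_on with
        | refl =>
            exact GAcc.eps (Or.inl ⟨rfl, Or.inr rfl⟩) (fun ψ hψ => hψ.elim)
              (GAcc.refl b _ (fun ψ hψ => hψ.elim))
        | head hstep hrest ih =>
            have hm := AG_map_star_inl sat Pa hstep
            exact GAcc.eps (Or.inl ⟨rfl, Or.inl rfl⟩) (fun ψ hψ => hψ.elim)
              (hm.trans (GAcc.eps (Or.inr ⟨rfl, rfl⟩) hm.ok_last
                (GAcc.eps (Or.inr ⟨rfl, rfl⟩) (fun ψ hψ => hψ.elim) ih)))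
      constructor
      · rintro ⟨m, js, h0, hl, hs⟩
        have hev : ∀ l : Fin (m + 1), Even (js l) := by
          intro l
          induction l using Fin.induction with
          | zero => rw [h0]; exact ⟨j, by ring⟩
          | succ l ih => exact (match_even_le sat Pa (hs l).2 ih).1
        have key : ∀ l : Fin (m + 1), AGIter sat Pa c j (js l / 2) := by
          intro l
          induction l using Fin.induction with
          | zero =>
              rw [h0, show 2 * j / 2 = j from by omega]
          | succ l ih =>
              refine ih.tail ?_
              have h1 := (hs l).2
              obtain ⟨a, ha⟩ := hev l.castSucc
              obtain ⟨b, hb⟩ := hev l.succ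
              rw [show js l.castSucc = 2 * (js l.castSucc / 2) from by omega,
                show js l.succ = 2 * (js l.succ / 2) from by omega] at h1
              exact (ihc _ _).mp h1
        have := key (Fin.last m)
        rw [hl, show 2 * j' / 2 = j' from by omega] at this
        exact fwd j j' this
      · intro h
        have hit := (AGstar_inv sat Pa h rfl).2.1 rfl
        clear h
        induction hit with
        | refl => exact ⟨0, fun _ => 2 * j, rfl, rfl, fun l => l.elim0⟩
        | @tail jb jc hab hbc ih =>
            obtain ⟨m, js, h0, hl, hs⟩ := ih
            have hmc := (ihc jb jc).mpr hbc
            refine ⟨m + 1, Fin.snoc js (2 * jc), ?_, ?_, ?_⟩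
            · rw [show (0 : Fin (m + 2)) = Fin.castSucc 0 from rfl, Fin.snoc_castSucc]
              exact h0
            · exact Fin.snoc_last _ _
            · intro l
              induction l using Fin.lastCases with
              | last =>
                  rw [show (Fin.last m).succ = Fin.last (m + 1) from rfl, Fin.snoc_last,
                    Fin.snoc_castSucc, hl]
                  exact ⟨by have := hbc.le; omega, hmc⟩
              | cast l0 =>
                  rw [Fin.succ_castSucc, Fin.snoc_castSucc, Fin.snoc_castSucc]
                  exact hs l0
  | test ψ =>
      constructor
      · rintro ⟨heq, hsat⟩
        obtain rfl : j = j' := by omega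
        refine GAcc.eps (Or.inl ⟨rfl, rfl⟩)
          (fun ψ' hψ' => by simp only [Prog.mark, Prog.q0, Set.mem_setOf_eq] at hψ'; exact absurd hψ'.1 (by decide : ¬ (0 : Fin 3) = 1)) ?_
        refine GAcc.eps (Or.inr ⟨rfl, rfl⟩) ?_
          (GAcc.refl j (2 : Fin 3) (fun ψ' hψ' => absurd hψ'.1 (by decide : ¬ (2 : Fin 3) = 1)))
        rintro ψ' ⟨-, rfl⟩
        rw [show 2 * j / 2 = j from by omega] at hsat
        exact hsat
      · intro h
        obtain ⟨h1, h2⟩ := (test_inv sat Pa h).1 rfl rfl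
        refine ⟨by omega, ?_⟩
        rw [show 2 * j / 2 = j from by omega]
        exact h2

lemma witness_iff_AG (α : Prog P F n) (a b : ℕ) (hab : a ≤ b) :
    Witness sat α Pa (a + a) (b + b) ↔ AG sat Pa α a α.q0 b α.qf := by
  have h0 : Witness sat α Pa (a + a) (b + b) ↔
      FW α.ρ α.ρε α.mark (fun ψ j => sat ψ (PAdrop Pa j)) (fun j m => (Pa m).pr j)
        ((b + b - (a + a)) / 2) ((a + a) / 2) α.q0 α.qf := Iff.rfl
  rw [h0, show (b + b - (a + a)) / 2 = b - a from by omega,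
    show (a + a) / 2 = a from by omega, FW_iff_GAcc,
    show a + (b - a) = b from by omega]

end Main

/-- **Correctness of the construction of `M_α` (Lemma 2)**: `(Π, i, k) ∈ R(α)` holds iff
there is a witnessing state sequence of length `(k-i)/2 + 1` in `M_α` with marking sets
satisfying conditions (i)–(iv). -/
theorem match_iff_witness {S P F : Type} {n : ℕ}
    (sat : F → (Fin n → HPath S P) → Prop) (α : Prog P F n)
    (Pa : Fin n → HPath S P) (i k : ℕ) (hi : Even i) (hk : Even k) (hik : i ≤ k) :
    Match sat α Pa i k ↔ Witness sat α Pa i k := by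
  obtain ⟨a, rfl⟩ := hi
  obtain ⟨b, rfl⟩ := hk
  have hab : a ≤ b := by omega
  rw [witness_iff_AG sat Pa α a b hab, ← match_iff_AG sat Pa α a b,
    show 2 * a = a + a from by ring, show 2 * b = b + b from by ring]
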